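/- In a symmetric moment problem, the coefficients $u_{n,k}$ defined by $x^n/(b_0 b_1 \cdots b_{n-1}) = \sum_{k=0}^{[n/2]} u_{n,k} P_{n-2k}(x)$ satisfy the recurrence $u_{n+1,k} = \frac{b_{n-2k}}{b_n} u_{n,k} + \frac{b_{n+1-2k}}{b_n} u_{n,k-1}$ for all $n, k \geq 0$ (with $u_{n,k}=0$ for $k>[n/2]$ or $k<0$ and $b_n=0$ for $n<0$), and in particular all $u_{n,k} \geq 0$. -/

import Mathlib

open Polynomial

private lemma stmt2_deg (b : ℕ → ℝ) (P : ℕ → Polynomial ℝ)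
    (hb : ∀ n, 0 < b n) (hP0 : P 0 = 1)
    (hrec : ∀ n : ℕ, X * P n = C (b n) * P (n + 1) +
      C (if n = 0 then 0 else b (n - 1)) * P (n - 1)) :
    ∀ n, (P n).degree = n := by
  have hbne : ∀ n, b n ≠ 0 := fun n => (hb n).ne'
  intro n
  induction n using Nat.strong_induction_on with
  | _ n ih =>
    match n, ih with
    | 0, _ => simp [hP0]
    | 1, _ =>
      have h := hrec 0
      rw [hP0, if_pos rfl, map_zero, zero_mul, add_zero, mul_one] at h
      have h2 : degree (C (b 0) * P 1) = 1 := by rw [← h]; exact degree_X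
      rwa [degree_C_mul (hbne 0)] at h2
    | (m+2), ih =>
      have h := hrec (m+1)
      rw [if_neg (Nat.succ_ne_zero m), Nat.add_sub_cancel] at h
      have hsub : C (b (m+1)) * P (m+2) = X * P (m+1) - C (b m) * P m := by
        rw [h]; ring
      have hd1 : degree (X * P (m+1)) = ((m+2 : ℕ) : WithBot ℕ) := by
        rw [degree_mul, degree_X, ih (m+1) (by omega)]
        push_cast; ring
      have hd2 : degree (C (b m) * P m) < ((m+2 : ℕ) : WithBot ℕ) := by
        rw [degree_C_mul (hbne m), ih m (by omega)]
        exact_mod_cast Nat.lt_add_of_pos_right (by omega)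
      have h3 := degree_sub_eq_left_of_degree_lt (hd1 ▸ hd2)
      rw [← hsub, degree_C_mul (hbne (m+1))] at h3
      rw [h3, hd1]

private lemma stmt2_li (P : ℕ → Polynomial ℝ) (hdeg : ∀ n, (P n).degree = n) :
    ∀ s : Finset ℕ, ∀ c : ℕ → ℝ,
      (∑ i ∈ s, C (c i) * P i = 0) → ∀ i ∈ s, c i = 0 := by
  intro s
  induction s using Finset.induction_on_max with
  | empty => intro c _ i hi; exact absurd hi (Finset.notMem_empty i)
  | insert a s ha ih =>
    intro c hsum i hi
    have hans : a ∉ s := fun h => lt_irrefl a (ha a h)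
    have hca : c a = 0 := by
      have h1 := congrArg (fun p => Polynomial.coeff p a) hsum
      simp only [Finset.sum_insert hans, coeff_add, finset_sum_coeff, coeff_C_mul,
        coeff_zero] at h1
      have hz : ∀ i ∈ s, c i * (P i).coeff a = 0 := by
        intro i his
        have hPi : (P i).coeff a = 0 := coeff_eq_zero_of_degree_lt (by
          rw [hdeg i]; exact_mod_cast ha i his)
        rw [hPi, mul_zero]
      rw [Finset.sum_eq_zero hz, add_zero] at h1
      have hne : (P a).coeff a ≠ 0 := coeff_ne_zero_of_eq_degree (hdeg a)
      exact (mul_eq_zero.mp h1).resolve_right hne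
    rcases Finset.mem_insert.mp hi with rfl | his
    · exact hca
    · apply ih c _ i his
      rw [Finset.sum_insert hans, hca] at hsum
      simpa using hsum

private lemma stmt2_aux (b : ℕ → ℝ) (P : ℕ → Polynomial ℝ) (u : ℕ → ℕ → ℝ)
    (hb : ∀ n, 0 < b n)
    (hrec : ∀ n : ℕ, X * P n = C (b n) * P (n + 1) +
      C (if n = 0 then 0 else b (n - 1)) * P (n - 1))
    (hexp : ∀ n : ℕ, C (∏ i ∈ Finset.range n, b i)⁻¹ * X ^ n =
      ∑ k ∈ Finset.range (n / 2 + 1), C (u n k) * P (n - 2 * k))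
    (li : ∀ s : Finset ℕ, ∀ c : ℕ → ℝ,
      (∑ i ∈ s, C (c i) * P i = 0) → ∀ i ∈ s, c i = 0) :
    ∀ n k : ℕ, k ∈ Finset.range ((n+1)/2 + 1) →
      b n * u (n+1) k =
        (if 2*k ≤ n then b (n - 2*k) else 0) * u n k +
        (if 2*k ≤ n+1 then b (n+1 - 2*k) else 0) * (if k = 0 then 0 else u n (k-1)) := by
  have hbne : ∀ m, b m ≠ 0 := fun m => (hb m).ne'
  intro n
  set c1 : ℕ → ℝ := fun k => (if 2*k ≤ n then b (n - 2*k) else 0) * u n k with hc1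
  set c2 : ℕ → ℝ := fun k =>
    (if 2*k ≤ n+1 then b (n+1 - 2*k) else 0) * (if k = 0 then 0 else u n (k-1)) with hc2
  have hs : b n * (∏ i ∈ Finset.range (n+1), b i)⁻¹ = (∏ i ∈ Finset.range n, b i)⁻¹ := by
    rw [Finset.prod_range_succ, mul_inv,
      mul_comm (∏ i ∈ Finset.range n, b i)⁻¹ (b n)⁻¹, ← mul_assoc,
      mul_inv_cancel₀ (hbne n), one_mul]
  have hstep : C (b n) * (C (∏ i ∈ Finset.range (n+1), b i)⁻¹ * X ^ (n+1)) =
      X * (C (∏ i ∈ Finset.range n, b i)⁻¹ * X ^ n) := by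
    rw [← mul_assoc, ← C_mul, hs, pow_succ]; ring
  have hmain : ∑ k ∈ Finset.range ((n+1)/2 + 1), C (b n * u (n+1) k) * P (n+1 - 2*k) =
      X * ∑ k ∈ Finset.range (n/2 + 1), C (u n k) * P (n - 2*k) := by
    rw [← hexp n, ← hstep, hexp (n+1), Finset.mul_sum]
    refine Finset.sum_congr rfl fun k _ => ?_
    rw [C_mul]; ring
  have hterm : ∀ k ∈ Finset.range (n/2 + 1),
      X * (C (u n k) * P (n - 2*k)) =
      C (c1 k) * P (n+1 - 2*k) + C (c2 (k+1)) * P (n+1 - 2*(k+1)) := by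
    intro k hk
    have hk' : 2*k ≤ n := by
      have := Finset.mem_range.mp hk; omega
    rw [mul_left_comm, hrec (n - 2*k), mul_add]
    congr 1
    · have e1 : n - 2*k + 1 = n+1 - 2*k := by omega
      rw [e1, ← mul_assoc, ← C_mul, hc1]
      simp only [if_pos hk']
      ring_nf
    · by_cases h0 : n - 2*k = 0
      · have h2 : ¬ (2*(k+1) ≤ n+1) := by omega
        simp [h0, hc2, h2]
      · have h2 : 2*(k+1) ≤ n+1 := by omega
        have e1 : n - 2*k - 1 = n+1 - 2*(k+1) := by omega
        rw [if_neg h0, e1, ← mul_assoc, ← C_mul, hc2]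
        simp only [if_pos h2, Nat.succ_ne_zero, if_false, Nat.add_sub_cancel]
        rw [mul_comm (u n k)]
  have hRHS : X * ∑ k ∈ Finset.range (n/2 + 1), C (u n k) * P (n - 2*k) =
      ∑ k ∈ Finset.range ((n+1)/2 + 1), C (c1 k + c2 k) * P (n+1 - 2*k) := by
    rw [Finset.mul_sum, Finset.sum_congr rfl hterm, Finset.sum_add_distrib]
    have hB : ∑ k ∈ Finset.range (n/2 + 1), C (c2 (k+1)) * P (n+1 - 2*(k+1)) =
        ∑ j ∈ Finset.range (n/2 + 2), C (c2 j) * P (n+1 - 2*j) := by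
      rw [Finset.sum_range_succ' (fun j => C (c2 j) * P (n+1 - 2*j)) (n/2+1)]
      simp [hc2]
    rw [hB]
    have hA : ∑ k ∈ Finset.range (n/2 + 1), C (c1 k) * P (n+1 - 2*k) =
        ∑ k ∈ Finset.range ((n+1)/2 + 1), C (c1 k) * P (n+1 - 2*k) := by
      apply Finset.sum_subset
      · apply Finset.range_subset_range.mpr; omega
      · intro k _ hk
        have h1 : ¬ (2*k ≤ n) := by
          have := Finset.mem_range.not.mp hk; omega
        simp [hc1, h1]
    have hBr : ∑ j ∈ Finset.range (n/2 + 2), C (c2 j) * P (n+1 - 2*j) =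
        ∑ j ∈ Finset.range ((n+1)/2 + 1), C (c2 j) * P (n+1 - 2*j) := by
      symm
      apply Finset.sum_subset
      · apply Finset.range_subset_range.mpr; omega
      · intro j hj hj'
        have h1 := Finset.mem_range.mp hj
        have h2 := Finset.mem_range.not.mp hj'
        have h3 : ¬ (2*j ≤ n+1) := by omega
        simp [hc2, h3]
    rw [hA, hBr, ← Finset.sum_add_distrib]
    refine Finset.sum_congr rfl fun k _ => ?_
    rw [C_add, add_mul]
  have hzero : ∑ k ∈ Finset.range ((n+1)/2 + 1),
      C (b n * u (n+1) k - (c1 k + c2 k)) * P (n+1 - 2*k) = 0 := by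
    have h4 := hmain.trans hRHS
    rw [← sub_eq_zero] at h4
    rw [← h4, ← Finset.sum_sub_distrib]
    refine Finset.sum_congr rfl fun k _ => ?_
    rw [C_sub, sub_mul]
  set d : ℕ → ℝ := fun i => b n * u (n+1) ((n+1-i)/2) - (c1 ((n+1-i)/2) + c2 ((n+1-i)/2))
    with hd
  have himg : ∑ i ∈ (Finset.range ((n+1)/2 + 1)).image (fun k => n+1 - 2*k),
      C (d i) * P i = 0 := by
    rw [Finset.sum_image]
    · rw [← hzero]
      refine Finset.sum_congr rfl fun k hk => ?_
      have hk' : 2*k ≤ n+1 := by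
        have := Finset.mem_range.mp hk; omega
      have h5 : (n+1 - (n+1 - 2*k))/2 = k := by omega
      rw [hd]; simp only [h5]
    · intro x hx y hy hxy
      have hx' := Finset.mem_range.mp hx
      have hy' := Finset.mem_range.mp hy
      simp only at hxy
      omega
  intro k hk
  have hk' : 2*k ≤ n+1 := by
    have := Finset.mem_range.mp hk; omega
  have hmem : n+1 - 2*k ∈ (Finset.range ((n+1)/2 + 1)).image (fun k => n+1 - 2*k) :=
    Finset.mem_image_of_mem _ hk
  have h6 := li _ _ himg _ hmem
  rw [hd] at h6
  simp only at h6
  have hkk : (n+1 - (n+1 - 2*k))/2 = k := by omega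
  rw [hkk] at h6
  have h7 := sub_eq_zero.mp h6
  simpa [hc1, hc2] using h7

/-- for a symmetric moment problem, the coefficients `u n k` defined by
`x^n/(b_0⋯b_{n-1}) = ∑_{k ≤ n/2} u_{n,k} P_{n-2k}` satisfy the recurrence
`u_{n+1,k} = (b_{n-2k}/b_n) u_{n,k} + (b_{n+1-2k}/b_n) u_{n,k-1}`
(with the conventions `u_{n,k} = 0` for `k > ⌊n/2⌋` or `k < 0`, and `b_m = 0` for `m < 0`),
and all `u_{n,k} ≥ 0`. -/
theorem stmt2 (b : ℕ → ℝ) (P : ℕ → Polynomial ℝ) (u : ℕ → ℕ → ℝ)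
    (hb : ∀ n, 0 < b n) (hP0 : P 0 = 1)
    (hrec : ∀ n : ℕ, X * P n = C (b n) * P (n + 1) +
      C (if n = 0 then 0 else b (n - 1)) * P (n - 1))
    (hexp : ∀ n : ℕ, C (∏ i ∈ Finset.range n, b i)⁻¹ * X ^ n =
      ∑ k ∈ Finset.range (n / 2 + 1), C (u n k) * P (n - 2 * k))
    (huz : ∀ n k : ℕ, n / 2 < k → u n k = 0) :
    (∀ n k : ℕ, u (n + 1) k =
      (if 2 * k ≤ n then b (n - 2 * k) else 0) / b n * u n k +
      (if 2 * k ≤ n + 1 then b (n + 1 - 2 * k) else 0) / b n *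
        (if k = 0 then 0 else u n (k - 1))) ∧
    (∀ n k : ℕ, 0 ≤ u n k) := by
  have hbne : ∀ m, b m ≠ 0 := fun m => (hb m).ne'
  have hdeg := stmt2_deg b P hb hP0 hrec
  have li := stmt2_li P hdeg
  have key := stmt2_aux b P u hb hrec hexp li
  have hrec' : ∀ n k : ℕ, u (n + 1) k =
      (if 2 * k ≤ n then b (n - 2 * k) else 0) / b n * u n k +
      (if 2 * k ≤ n + 1 then b (n + 1 - 2 * k) else 0) / b n *
        (if k = 0 then 0 else u n (k - 1)) := by
    intro n k
    by_cases hk : k ∈ Finset.range ((n+1)/2 + 1)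
    · have h := key n k hk
      rw [div_mul_eq_mul_div, div_mul_eq_mul_div, ← add_div,
        eq_div_iff (hbne n), mul_comm]
      exact h
    · have hk1 : (n+1)/2 < k := by
        have := Finset.mem_range.not.mp hk; omega
      rw [huz (n+1) k hk1]
      have h1 : ¬ (2*k ≤ n) := by omega
      have h2 : ¬ (2*k ≤ n+1) := by omega
      simp [h1, h2]
  refine ⟨hrec', ?_⟩
  have hu00 : u 0 0 = 1 := by
    have h := hexp 0
    simp [hP0] at h
    exact C_injective (by rw [C_1]; exact h.symm)
  intro n
  induction n with
  | zero =>
    intro k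
    rcases Nat.eq_zero_or_pos k with rfl | hkp
    · rw [hu00]; norm_num
    · rw [huz 0 k (by omega)]
  | succ n ihn =>
    intro k
    rw [hrec' n k]
    apply add_nonneg
    · apply mul_nonneg (div_nonneg ?_ (hb n).le) (ihn k)
      split_ifs
      exacts [(hb _).le, le_refl 0]
    · apply mul_nonneg (div_nonneg ?_ (hb n).le) ?_
      · split_ifs
        exacts [(hb _).le, le_refl 0]
      · split_ifs
        exacts [le_refl 0, ihn (k-1)]
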